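/- arXiv:2506.06644 — 2 statements merged into one kernel-verified Lean document; each statement's English description precedes it below -/
import Mathlib

section
/- For any δ > 0, the scalar function x ↦ huber(max(x - θ, 0); δ)/δ, where huber(t; δ) = t²/2 for |t| < δ and δ(|t| - δ/2) otherwise, is continuously differentiable jointly in (x, θ) ∈ ℝ². -/
/-- The Huber function. -/
noncomputable def huber (δ t : ℝ) : ℝ :=
  if |t| < δ then t^2 / 2 else δ * (|t| - δ/2)

lemma relu_sq_hasDerivAt (u : ℝ) :
    HasDerivAt (fun v : ℝ => (max v 0)^2) (2 * max u 0) u := by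
  rcases lt_trichotomy u 0 with h | h | h
  · have : 2 * max u 0 = 0 := by rw [max_eq_right h.le]; ring
    rw [this]
    have he : (fun v : ℝ => (max v 0)^2) =ᶠ[nhds u] fun _ => (0:ℝ) := by
      filter_upwards [Iio_mem_nhds h] with v hv
      rw [max_eq_right (le_of_lt hv)]; ring
    exact (hasDerivAt_const u (0:ℝ)).congr_of_eventuallyEq he
  · subst h
    rw [max_self, mul_zero, hasDerivAt_iff_tendsto_slope]
    have h1 : Filter.Tendsto (fun v : ℝ => max v 0) (nhdsWithin 0 {(0:ℝ)}ᶜ) (nhds 0) := by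
      have h0 : Filter.Tendsto (fun v : ℝ => max v 0) (nhds 0) (nhds (max 0 0)) :=
        ((continuous_id.max continuous_const).tendsto 0)
      simpa using h0.mono_left nhdsWithin_le_nhds
    refine h1.congr' ?_
    filter_upwards [self_mem_nhdsWithin] with v hv
    have hv' : v ≠ 0 := hv
    rcases lt_or_gt_of_ne hv' with h | h
    · simp [slope, max_eq_right h.le]
    · field_simp [slope, max_eq_left h.le, sq]
      simp only [slope_def_field, max_eq_left h.le, max_self]
      rw [eq_div_iff (sub_ne_zero.mpr hv')]
      ring
  · have he : (fun v : ℝ => (max v 0)^2) =ᶠ[nhds u] fun v => v^2 := by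
      filter_upwards [Ioi_mem_nhds h] with v hv
      rw [max_eq_left (le_of_lt hv)]
    have : HasDerivAt (fun v : ℝ => v^2) (2 * max u 0) u := by
      rw [max_eq_left h.le]
      simpa using hasDerivAt_pow 2 u
    exact this.congr_of_eventuallyEq he

lemma relu_sq_contDiff : ContDiff ℝ 1 (fun v : ℝ => (max v 0)^2) := by
  rw [contDiff_one_iff_deriv]
  refine ⟨fun u => (relu_sq_hasDerivAt u).differentiableAt, ?_⟩
  have : deriv (fun v : ℝ => (max v 0)^2) = fun u => 2 * max u 0 := by
    funext u; exact (relu_sq_hasDerivAt u).deriv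
  rw [this]
  exact continuous_const.mul (continuous_id.max continuous_const)

/-- For any `δ > 0`, the map `(x, θ) ↦ huber(max(x - θ, 0); δ)/δ` is continuously
differentiable jointly in `(x, θ)`. -/
theorem huber_softThreshold_contDiff (δ : ℝ) (hδ : 0 < δ) :
    ContDiff ℝ 1 (fun p : ℝ × ℝ => huber δ (max (p.1 - p.2) 0) / δ) := by
  have key : ∀ u : ℝ, huber δ (max u 0) / δ
      = ((max u 0)^2 - (max (u - δ) 0)^2) / (2*δ) := by
    intro u
    have hnn : 0 ≤ max u 0 := le_max_right _ _
    unfold huber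
    rw [abs_of_nonneg hnn]
    split_ifs with h
    · have : max (u - δ) 0 = 0 := by
        apply max_eq_right
        have : u < δ := lt_of_le_of_lt (le_max_left _ _) h
        linarith
      rw [this]
      field_simp
      ring
    · push_neg at h
      have hu : max u 0 = u := by
        rcases le_or_gt u 0 with hc | hc
        · rw [max_eq_right hc] at h; linarith
        · exact max_eq_left hc.le
      have hu2 : max (u - δ) 0 = u - δ := by
        apply max_eq_left; rw [hu] at h; linarith
      rw [hu, hu2]
      field_simp
      ring
  have : (fun p : ℝ × ℝ => huber δ (max (p.1 - p.2) 0) / δ)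
      = fun p : ℝ × ℝ => ((max (p.1 - p.2) 0)^2 - (max (p.1 - p.2 - δ) 0)^2) / (2*δ) := by
    funext p; exact key _
  rw [this]
  apply ContDiff.div_const
  have h1 : ContDiff ℝ 1 (fun p : ℝ × ℝ => p.1 - p.2) := contDiff_fst.sub contDiff_snd
  have h2 : ContDiff ℝ 1 (fun p : ℝ × ℝ => p.1 - p.2 - δ) := h1.sub contDiff_const
  exact (relu_sq_contDiff.comp h1).sub (relu_sq_contDiff.comp h2)
end

section
/- Let x₁, ..., x_d be i.i.d. N(μ, σ²) with d ≥ max{2, log(6/δ)} and δ ∈ (0,1), and let s be the sample standard deviation. With probability at least 1 - δ/3, |s - σ| ≤ 8σ·√(log(6/δ)/d). -/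
open ProbabilityTheory MeasureTheory Finset Real
open scoped ENNReal NNReal

section Aux

lemma log_one_sub_ge {y : ℝ} (h0 : 0 ≤ y) (h2 : y ≤ 1/2) :
    -y - 2*y^2 ≤ Real.log (1 - y) := by
  have hy1 : 0 < 1 - y := by linarith
  have h := Real.one_sub_inv_le_log_of_pos hy1
  have : -y - 2*y^2 ≤ 1 - (1-y)⁻¹ := by
    rw [le_sub_iff_add_le, ← sub_nonneg]
    have hinv : (1-y)⁻¹ = 1 + y/(1-y) := by field_simp; ring
    rw [hinv]
    have : y/(1-y) ≤ y + 2*y^2 := by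
      rw [div_le_iff₀ hy1]
      nlinarith
    nlinarith
  linarith

lemma log_one_add_ge {y : ℝ} (h0 : 0 ≤ y) : y - y^2 ≤ Real.log (1 + y) := by
  have hy1 : 0 < 1 + y := by linarith
  have h := Real.one_sub_inv_le_log_of_pos hy1
  have : y - y^2 ≤ 1 - (1+y)⁻¹ := by
    rw [le_sub_iff_add_le, ← sub_nonneg]
    have hinv : (1+y)⁻¹ = 1 - y/(1+y) := by field_simp; ring
    rw [hinv]
    have : y - y^2 ≤ y/(1+y) := by
      rw [le_div_iff₀ hy1]
      nlinarith
    nlinarith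
  linarith

lemma sqrt_dev {a b ε : ℝ} (ha : 0 ≤ a) (hb : 0 ≤ b) (hε : 0 ≤ ε)
    (h2 : a ≤ b*(1+ε)^2) (h1 : b*(1-ε)^2 ≤ a ∨ 1 ≤ ε) :
    |Real.sqrt a - Real.sqrt b| ≤ Real.sqrt b * ε := by
  have hsb : 0 ≤ Real.sqrt b := Real.sqrt_nonneg b
  rw [abs_le]
  constructor
  · -- √b - √a ≤ √b ε, i.e. √b (1-ε) ≤ √a
    rcases h1 with h1 | h1
    · rcases le_total 1 ε with hε1 | hε1
      · nlinarith [Real.sqrt_nonneg a]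
      · have : Real.sqrt (b*(1-ε)^2) ≤ Real.sqrt a := Real.sqrt_le_sqrt h1
        rw [Real.sqrt_mul hb, Real.sqrt_sq (by linarith : (0:ℝ) ≤ 1 - ε)] at this
        nlinarith
    · nlinarith [Real.sqrt_nonneg a]
  · -- √a ≤ √b (1+ε)
    have : Real.sqrt a ≤ Real.sqrt (b*(1+ε)^2) := Real.sqrt_le_sqrt h2
    rw [Real.sqrt_mul hb, Real.sqrt_sq (by linarith : (0:ℝ) ≤ 1 + ε)] at this
    nlinarith

lemma integral_gaussianReal_eq {v : NNReal} (hv : v ≠ 0) (f : ℝ → ℝ) :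
    ∫ x, f x ∂(gaussianReal 0 v) = ∫ x, gaussianPDFReal 0 v x * f x := by
  rw [gaussianReal_of_var_ne_zero _ hv, gaussianPDF_def]
  have hmeas : Measurable (fun x => (gaussianPDFReal 0 v x).toNNReal) :=
    (measurable_gaussianPDFReal 0 v).real_toNNReal
  have hd : (fun x => ENNReal.ofReal (gaussianPDFReal 0 v x))
      = fun x => ((fun x => (gaussianPDFReal 0 v x).toNNReal) x : ℝ≥0∞) := rfl
  rw [hd, integral_withDensity_eq_integral_smul hmeas]
  congr 1
  ext x
  simp [NNReal.smul_def, Real.coe_toNNReal _ (gaussianPDFReal_nonneg 0 v x)]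

lemma integrable_gaussianReal_iff {v : NNReal} (hv : v ≠ 0) (f : ℝ → ℝ) :
    Integrable f (gaussianReal 0 v) ↔
      Integrable (fun x => gaussianPDFReal 0 v x * f x) volume := by
  rw [gaussianReal_of_var_ne_zero _ hv, gaussianPDF_def]
  have hmeas : Measurable (fun x => (gaussianPDFReal 0 v x).toNNReal) :=
    (measurable_gaussianPDFReal 0 v).real_toNNReal
  have hd : (fun x => ENNReal.ofReal (gaussianPDFReal 0 v x))
      = fun x => ((fun x => (gaussianPDFReal 0 v x).toNNReal) x : ℝ≥0∞) := rfl
  rw [hd, integrable_withDensity_iff_integrable_smul hmeas]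
  apply integrable_congr
  filter_upwards with x
  simp [NNReal.smul_def, Real.coe_toNNReal _ (gaussianPDFReal_nonneg 0 v x)]

lemma gauss_sq_kernel {v : NNReal} (hv : v ≠ 0) {t : ℝ} (x : ℝ) :
    gaussianPDFReal 0 v x * rexp (t * x^2)
      = (Real.sqrt (2*π*v))⁻¹ * rexp (-((2*(v:ℝ))⁻¹ - t) * x^2) := by
  have hv0 : (0:ℝ) < v := lt_of_le_of_ne (v.coe_nonneg) (by exact_mod_cast (Ne.symm hv))
  rw [gaussianPDFReal, mul_assoc, ← Real.exp_add]
  congr 1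
  field_simp
  ring

lemma integrable_exp_sq_gaussian {v : NNReal} (hv : v ≠ 0) {t : ℝ} (ht : 2*t*v < 1) :
    Integrable (fun x => rexp (t * x^2)) (gaussianReal 0 v) := by
  have hv0 : (0:ℝ) < v := lt_of_le_of_ne (v.coe_nonneg) (by exact_mod_cast (Ne.symm hv))
  have h2v : (0:ℝ) < 2*(v:ℝ) := by positivity
  have hb : 0 < (2*(v:ℝ))⁻¹ - t := by
    nlinarith [mul_inv_cancel₀ h2v.ne', inv_nonneg.2 h2v.le]
  rw [integrable_gaussianReal_iff hv]
  have : (fun x => gaussianPDFReal 0 v x * rexp (t * x^2))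
      = fun x => (Real.sqrt (2*π*v))⁻¹ * rexp (-((2*(v:ℝ))⁻¹ - t) * x^2) := by
    ext x; exact gauss_sq_kernel hv x
  rw [this]
  exact (integrable_exp_neg_mul_sq hb).const_mul _

lemma integral_exp_sq_gaussian {v : NNReal} (hv : v ≠ 0) {t : ℝ} (ht : 2*t*v < 1) :
    ∫ x, rexp (t * x^2) ∂(gaussianReal 0 v) = (Real.sqrt (1 - 2*t*v))⁻¹ := by
  have hv0 : (0:ℝ) < v := lt_of_le_of_ne (v.coe_nonneg) (by exact_mod_cast (Ne.symm hv))
  have h2v : (0:ℝ) < 2*(v:ℝ) := by positivity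
  have hb : 0 < (2*(v:ℝ))⁻¹ - t := by
    nlinarith [mul_inv_cancel₀ h2v.ne', inv_nonneg.2 h2v.le]
  rw [integral_gaussianReal_eq hv]
  calc ∫ x, gaussianPDFReal 0 v x * rexp (t * x^2)
      = ∫ x, (Real.sqrt (2*π*v))⁻¹ * rexp (-((2*(v:ℝ))⁻¹ - t) * x^2) := by
        congr 1; ext x; exact gauss_sq_kernel hv x
    _ = (Real.sqrt (2*π*v))⁻¹ * ∫ x, rexp (-((2*(v:ℝ))⁻¹ - t) * x^2) := by
        rw [integral_const_mul]
    _ = (Real.sqrt (2*π*v))⁻¹ * Real.sqrt (π / ((2*(v:ℝ))⁻¹ - t)) := by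
        rw [integral_gaussian]
    _ = (Real.sqrt (1 - 2*t*v))⁻¹ := by
        rw [← Real.sqrt_inv, ← Real.sqrt_mul (by positivity), ← Real.sqrt_inv]
        congr 1
        have hπ : (0:ℝ) < π := Real.pi_pos
        have hkey : (2*π*(v:ℝ)) * (((2*(v:ℝ))⁻¹ - t)/π) = 1 - 2*t*v := by
          field_simp
        rw [← hkey]
        field_simp

lemma gauss_lin_kernel {v : NNReal} (hv : v ≠ 0) (t : ℝ) (x : ℝ) :
    gaussianPDFReal 0 v x * rexp (t * x)
      = rexp (t^2 * v / 2) * gaussianPDFReal (t*v) v x := by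
  have hv0 : (0:ℝ) < v := lt_of_le_of_ne (v.coe_nonneg) (by exact_mod_cast (Ne.symm hv))
  have hkey : rexp (-(x-0)^2/(2*(v:ℝ))) * rexp (t*x)
      = rexp (t^2*(v:ℝ)/2) * rexp (-(x - t*(v:ℝ))^2/(2*(v:ℝ))) := by
    rw [← Real.exp_add, ← Real.exp_add]
    congr 1
    field_simp
    ring
  rw [gaussianPDFReal, gaussianPDFReal, mul_assoc, hkey]
  ring

lemma integrable_exp_lin_gaussian {v : NNReal} (hv : v ≠ 0) (t : ℝ) :
    Integrable (fun x => rexp (t * x)) (gaussianReal 0 v) := by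
  rw [integrable_gaussianReal_iff hv]
  have : (fun x => gaussianPDFReal 0 v x * rexp (t * x))
      = fun x => rexp (t^2 * v / 2) * gaussianPDFReal (t*v) v x := by
    ext x; exact gauss_lin_kernel hv t x
  rw [this]
  exact (integrable_gaussianPDFReal _ _).const_mul _

lemma integral_exp_lin_gaussian {v : NNReal} (hv : v ≠ 0) (t : ℝ) :
    ∫ x, rexp (t * x) ∂(gaussianReal 0 v) = rexp (t^2 * v / 2) := by
  rw [integral_gaussianReal_eq hv]
  calc ∫ x, gaussianPDFReal 0 v x * rexp (t * x)
      = ∫ x, rexp (t^2 * v / 2) * gaussianPDFReal (t*v) v x := by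
        congr 1; ext x; exact gauss_lin_kernel hv t x
    _ = rexp (t^2 * v / 2) * ∫ x, gaussianPDFReal (t*v) v x := by rw [integral_const_mul]
    _ = rexp (t^2 * v / 2) := by rw [integral_gaussianPDFReal_eq_one _ hv, mul_one]

end Aux

open ProbabilityTheory MeasureTheory Finset Real
open scoped ENNReal NNReal

section Transfer

variable {Ω : Type*} [MeasureSpace Ω] [IsProbabilityMeasure (ℙ : Measure Ω)]

lemma mgf_sq_of_gaussian {v : NNReal} (hv : v ≠ 0) {Y : Ω → ℝ} (hY : Measurable Y)
    (hlawY : Measure.map Y ℙ = gaussianReal 0 v) {t : ℝ} (ht : 2*t*v < 1) :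
    Integrable (fun ω => rexp (t * (Y ω)^2)) ℙ ∧
    mgf (fun ω => (Y ω)^2) ℙ t = (Real.sqrt (1 - 2*t*v))⁻¹ := by
  have hint : Integrable (fun x => rexp (t * x^2)) (Measure.map Y ℙ) := by
    rw [hlawY]; exact integrable_exp_sq_gaussian hv ht
  have hmi : AEStronglyMeasurable (fun x : ℝ => rexp (t * x^2)) (Measure.map Y ℙ) :=
    (((measurable_id.pow_const 2).const_mul t).exp).aestronglyMeasurable
  constructor
  · exact (integrable_map_measure hmi hY.aemeasurable).mp hint
  · show ∫ ω, rexp (t * (Y ω)^2) ∂ℙ = _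
    calc ∫ ω, rexp (t * (Y ω)^2) ∂ℙ
        = ∫ x, rexp (t * x^2) ∂(Measure.map Y ℙ) := (integral_map hY.aemeasurable hmi).symm
      _ = (Real.sqrt (1 - 2*t*v))⁻¹ := by rw [hlawY]; exact integral_exp_sq_gaussian hv ht

lemma mgf_lin_of_gaussian {v : NNReal} (hv : v ≠ 0) {Y : Ω → ℝ} (hY : Measurable Y)
    (hlawY : Measure.map Y ℙ = gaussianReal 0 v) (t : ℝ) :
    Integrable (fun ω => rexp (t * Y ω)) ℙ ∧
    mgf Y ℙ t = rexp (t^2 * v / 2) := by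
  have hint : Integrable (fun x => rexp (t * x)) (Measure.map Y ℙ) := by
    rw [hlawY]; exact integrable_exp_lin_gaussian hv t
  have hmi : AEStronglyMeasurable (fun x : ℝ => rexp (t * x)) (Measure.map Y ℙ) :=
    ((measurable_id.const_mul t).exp).aestronglyMeasurable
  constructor
  · exact (integrable_map_measure hmi hY.aemeasurable).mp hint
  · show ∫ ω, rexp (t * Y ω) ∂ℙ = _
    calc ∫ ω, rexp (t * Y ω) ∂ℙ
        = ∫ x, rexp (t * x) ∂(Measure.map Y ℙ) := (integral_map hY.aemeasurable hmi).symm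
      _ = rexp (t^2 * v / 2) := by rw [hlawY]; exact integral_exp_lin_gaussian hv t

end Transfer

section Chernoff

variable {Ω : Type*} [MeasureSpace Ω] [IsProbabilityMeasure (ℙ : Measure Ω)]
  {d : ℕ} {v : NNReal}

lemma chernoff_sq_upper (hv : v ≠ 0) {Z : Fin d → Ω → ℝ} (hZm : ∀ i, Measurable (Z i))
    (hZi : iIndepFun Z ℙ)
    (hZl : ∀ i, Measure.map (Z i) ℙ = gaussianReal 0 v)
    {lam : ℝ} (hlam0 : 0 ≤ lam) (hlam : 2*lam < 1) (a : ℝ) :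
    (ℙ {ω | (v:ℝ)*a ≤ ∑ i, (Z i ω)^2}).toReal
      ≤ rexp (-(lam*a) - (d:ℝ)*Real.log (1-2*lam)/2) := by
  have hv0 : (0:ℝ) < v := lt_of_le_of_ne v.coe_nonneg (by exact_mod_cast hv.symm)
  have hcan : (lam/(v:ℝ))*(v:ℝ) = lam := div_mul_cancel₀ lam hv0.ne'
  have htv : 2*(lam/(v:ℝ))*(v:ℝ) < 1 := by rw [mul_assoc, hcan]; exact hlam
  have ht0 : 0 ≤ lam/(v:ℝ) := by positivity
  set S : Fin d → Ω → ℝ := fun i ω => (Z i ω)^2 with hSdef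
  have hSm : ∀ i, Measurable (S i) := fun i => (hZm i).pow_const 2
  have hSi : iIndepFun S ℙ := by
    have h := hZi.comp (fun _ => fun x : ℝ => x^2) (fun _ => measurable_id.pow_const 2)
    exact h
  have hmg := fun i : Fin d => mgf_sq_of_gaussian hv (hZm i) (hZl i) htv
  have hint := hSi.integrable_exp_mul_sum (t := lam/(v:ℝ)) hSm (s := Finset.univ)
    (fun i _ => (hmg i).1)
  have hch := measure_ge_le_exp_mul_mgf (μ := ℙ) (X := ∑ i : Fin d, S i) ((v:ℝ)*a) ht0 hint
  rw [show {ω | (v:ℝ)*a ≤ (∑ i : Fin d, S i) ω} = {ω | (v:ℝ)*a ≤ ∑ i, (Z i ω)^2} from by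
    ext ω; simp [hSdef, Finset.sum_apply]] at hch
  refine hch.trans (le_of_eq ?_)
  have h12 : (0:ℝ) < 1 - 2*lam := by linarith
  have hmgfS : ∀ i : Fin d, mgf (S i) ℙ (lam/(v:ℝ)) = (Real.sqrt (1-2*lam))⁻¹ := by
    intro i
    have h2 := (hmg i).2
    rw [show (2*(lam/(v:ℝ))*(v:ℝ) : ℝ) = 2*lam from by rw [mul_assoc, hcan]] at h2
    exact h2
  rw [hSi.mgf_sum hSm, Finset.prod_congr rfl (fun i _ => hmgfS i), Finset.prod_const,
    Finset.card_univ, Fintype.card_fin]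
  have hsqrt : (Real.sqrt (1-2*lam))⁻¹ = rexp (-(Real.log (1-2*lam)/2)) := by
    rw [← Real.log_sqrt h12.le, Real.exp_neg, Real.exp_log (Real.sqrt_pos.2 h12)]
  rw [hsqrt, ← Real.exp_nat_mul, ← Real.exp_add]
  congr 1
  rw [show -(lam/(v:ℝ))*((v:ℝ)*a) = -(lam*a) from by field_simp]
  ring

lemma chernoff_sq_lower (hv : v ≠ 0) {Z : Fin d → Ω → ℝ} (hZm : ∀ i, Measurable (Z i))
    (hZi : iIndepFun Z ℙ)
    (hZl : ∀ i, Measure.map (Z i) ℙ = gaussianReal 0 v)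
    {lam : ℝ} (hlam0 : 0 ≤ lam) (a : ℝ) :
    (ℙ {ω | ∑ i, (Z i ω)^2 ≤ (v:ℝ)*a}).toReal
      ≤ rexp (lam*a - (d:ℝ)*Real.log (1+2*lam)/2) := by
  have hv0 : (0:ℝ) < v := lt_of_le_of_ne v.coe_nonneg (by exact_mod_cast hv.symm)
  have hcan : (-(lam/(v:ℝ)))*(v:ℝ) = -lam := by
    rw [neg_mul, div_mul_cancel₀ lam hv0.ne']
  have htv : 2*(-(lam/(v:ℝ)))*(v:ℝ) < 1 := by
    rw [mul_assoc, hcan]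
    nlinarith
  have ht0 : -(lam/(v:ℝ)) ≤ 0 := by rw [neg_nonpos]; positivity
  set S : Fin d → Ω → ℝ := fun i ω => (Z i ω)^2 with hSdef
  have hSm : ∀ i, Measurable (S i) := fun i => (hZm i).pow_const 2
  have hSi : iIndepFun S ℙ := by
    have h := hZi.comp (fun _ => fun x : ℝ => x^2) (fun _ => measurable_id.pow_const 2)
    exact h
  have hmg := fun i : Fin d => mgf_sq_of_gaussian hv (hZm i) (hZl i) htv
  have hint := hSi.integrable_exp_mul_sum (t := -(lam/(v:ℝ))) hSm (s := Finset.univ)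
    (fun i _ => (hmg i).1)
  have hch := measure_le_le_exp_mul_mgf (μ := ℙ) (X := ∑ i : Fin d, S i) ((v:ℝ)*a) ht0 hint
  rw [show {ω | (∑ i : Fin d, S i) ω ≤ (v:ℝ)*a} = {ω | ∑ i, (Z i ω)^2 ≤ (v:ℝ)*a} from by
    ext ω; simp [hSdef, Finset.sum_apply]] at hch
  refine hch.trans (le_of_eq ?_)
  have h12 : (0:ℝ) < 1 + 2*lam := by linarith
  have hmgfS : ∀ i : Fin d, mgf (S i) ℙ (-(lam/(v:ℝ))) = (Real.sqrt (1+2*lam))⁻¹ := by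
    intro i
    have h2 := (hmg i).2
    rw [show (1 - 2*(-(lam/(v:ℝ)))*(v:ℝ) : ℝ) = 1+2*lam from by rw [mul_assoc, hcan]; ring] at h2
    exact h2
  rw [hSi.mgf_sum hSm, Finset.prod_congr rfl (fun i _ => hmgfS i), Finset.prod_const,
    Finset.card_univ, Fintype.card_fin]
  have hsqrt : (Real.sqrt (1+2*lam))⁻¹ = rexp (-(Real.log (1+2*lam)/2)) := by
    rw [← Real.log_sqrt h12.le, Real.exp_neg, Real.exp_log (Real.sqrt_pos.2 h12)]
  rw [hsqrt, ← Real.exp_nat_mul, ← Real.exp_add]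
  congr 1
  rw [show -(-(lam/(v:ℝ)))*((v:ℝ)*a) = lam*a from by field_simp]
  ring

lemma chernoff_lin_mgf (hv : v ≠ 0) {Z : Fin d → Ω → ℝ} (hZm : ∀ i, Measurable (Z i))
    (hZi : iIndepFun Z ℙ)
    (hZl : ∀ i, Measure.map (Z i) ℙ = gaussianReal 0 v) (t : ℝ) :
    Integrable (fun ω => rexp (t * (∑ i : Fin d, Z i) ω)) ℙ ∧
    mgf (∑ i : Fin d, Z i) ℙ t = rexp ((d:ℝ)*(t^2*(v:ℝ)/2)) := by
  have hmg := fun i : Fin d => mgf_lin_of_gaussian hv (hZm i) (hZl i) t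
  constructor
  · exact hZi.integrable_exp_mul_sum (t := t) hZm (s := Finset.univ) (fun i _ => (hmg i).1)
  · rw [hZi.mgf_sum hZm, Finset.prod_congr rfl (fun i _ => (hmg i).2), Finset.prod_const,
      Finset.card_univ, Fintype.card_fin, ← Real.exp_nat_mul]

lemma chernoff_lin_upper (hv : v ≠ 0) (hd : 0 < d) {Z : Fin d → Ω → ℝ}
    (hZm : ∀ i, Measurable (Z i))
    (hZi : iIndepFun Z ℙ)
    (hZl : ∀ i, Measure.map (Z i) ℙ = gaussianReal 0 v)
    {r : ℝ} (hr : 0 ≤ r) :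
    (ℙ {ω | r ≤ ∑ i, Z i ω}).toReal ≤ rexp (-(r^2/(2*(d:ℝ)*(v:ℝ)))) := by
  have hv0 : (0:ℝ) < v := lt_of_le_of_ne v.coe_nonneg (by exact_mod_cast hv.symm)
  have hd0 : (0:ℝ) < (d:ℝ) := by exact_mod_cast hd
  set t := r/((d:ℝ)*(v:ℝ)) with htdef
  have ht0 : 0 ≤ t := by positivity
  obtain ⟨hint, hmgf⟩ := chernoff_lin_mgf hv hZm hZi hZl t
  have hch := measure_ge_le_exp_mul_mgf (μ := ℙ) (X := ∑ i : Fin d, Z i) r ht0 hint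
  rw [show {ω | r ≤ (∑ i : Fin d, Z i) ω} = {ω | r ≤ ∑ i, Z i ω} from by
    ext ω; simp [Finset.sum_apply]] at hch
  refine hch.trans (le_of_eq ?_)
  rw [hmgf, ← Real.exp_add]
  congr 1
  rw [htdef]
  field_simp
  ring

lemma chernoff_lin_lower (hv : v ≠ 0) (hd : 0 < d) {Z : Fin d → Ω → ℝ}
    (hZm : ∀ i, Measurable (Z i))
    (hZi : iIndepFun Z ℙ)
    (hZl : ∀ i, Measure.map (Z i) ℙ = gaussianReal 0 v)
    {r : ℝ} (hr : 0 ≤ r) :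
    (ℙ {ω | ∑ i, Z i ω ≤ -r}).toReal ≤ rexp (-(r^2/(2*(d:ℝ)*(v:ℝ)))) := by
  have hv0 : (0:ℝ) < v := lt_of_le_of_ne v.coe_nonneg (by exact_mod_cast hv.symm)
  have hd0 : (0:ℝ) < (d:ℝ) := by exact_mod_cast hd
  set t := -(r/((d:ℝ)*(v:ℝ))) with htdef
  have ht0 : t ≤ 0 := by rw [htdef, neg_nonpos]; positivity
  obtain ⟨hint, hmgf⟩ := chernoff_lin_mgf hv hZm hZi hZl t
  have hch := measure_le_le_exp_mul_mgf (μ := ℙ) (X := ∑ i : Fin d, Z i) (-r) ht0 hint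
  rw [show {ω | (∑ i : Fin d, Z i) ω ≤ -r} = {ω | ∑ i, Z i ω ≤ -r} from by
    ext ω; simp [Finset.sum_apply]] at hch
  refine hch.trans (le_of_eq ?_)
  rw [hmgf, ← Real.exp_add]
  congr 1
  rw [htdef]
  field_simp
  ring

lemma sample_var_identity (d : ℕ) (hd : (d:ℝ) ≠ 0) (a : Fin d → ℝ) (μ : ℝ) :
    (∑ i, (a i - (∑ j, a j)/(d:ℝ))^2)
      = (∑ i, (a i - μ)^2) - (∑ i, (a i - μ))^2/(d:ℝ) := by
  have h1 : ∀ (c : ℝ), ∑ i, (a i - c)^2 = ∑ i, (a i)^2 - 2*c*(∑ i, a i) + (d:ℝ)*c^2 := by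
    intro c
    have he : ∀ i : Fin d, (a i - c)^2 = ((a i)^2 - 2*c*(a i)) + c^2 := fun i => by ring
    rw [Finset.sum_congr rfl (fun i _ => he i), Finset.sum_add_distrib, Finset.sum_sub_distrib,
      ← Finset.mul_sum, Finset.sum_const, Finset.card_univ, Fintype.card_fin, nsmul_eq_mul]
  have hM : (∑ i, (a i - μ)) = (∑ i, a i) - (d:ℝ)*μ := by
    rw [Finset.sum_sub_distrib, Finset.sum_const, Finset.card_univ, Fintype.card_fin,
      nsmul_eq_mul]
  rw [h1 ((∑ j, a j)/(d:ℝ)), h1 μ, hM]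
  field_simp
  ring

lemma num1a {d u : ℝ} (hd : 2 ≤ d) (hu0 : 0 < u) (hu14 : u ≤ 1/4) (hL : 1 ≤ d*u^2) :
    d*u^2 + 1/2 ≤ u*((d-1)*(1+8*u)^2) - (d*u + 4*d*u^2) := by
  have A : u*((d-1)*(1+8*u)^2) - (d*u + 4*d*u^2) - (d*u^2 + 1/2)
      = 11*(d*u^2) + (64*(d*u^2)*u - 64*u^3) - u - 16*u^2 - 1/2 := by ring
  have f1 : 0 ≤ 64*(d*u^2)*u - 64*u^3 := by
    have h : 64*(d*u^2)*u - 64*u^3 = 64*u^3*(d-1) := by ring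
    rw [h]
    exact mul_nonneg (by positivity) (by linarith)
  have f3 : 16*u^2 ≤ 1 := by nlinarith
  linarith

lemma num1b {d u : ℝ} (hd : 2 ≤ d) (hu14 : 1/4 ≤ u) (hu1 : u ≤ 1) :
    d*u^2 + 1/2 ≤ (1/4)*((d-1)*(1+8*u)^2) - (d*(1/4) + 4*d*(1/4)^2) := by
  have hbr : (0:ℝ) ≤ 15*u^2 + 4*u - 1/4 := by nlinarith
  have f : 2*(15*u^2 + 4*u - 1/4) ≤ d*(15*u^2 + 4*u - 1/4) :=
    mul_le_mul_of_nonneg_right hd hbr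
  have g : (0:ℝ) ≤ 14*u^2 + 4*u - 5/4 := by nlinarith [sq_nonneg (u - 1/4)]
  linarith

lemma num2 {d u L lg : ℝ} (hL1 : 1 ≤ L) (hdu2 : d*u^2 = L)
    (hlg : d*(2*u - (2*u)^2) ≤ d*lg) :
    u*(d - 4*(d*u)) - d*lg/2 ≤ -(L+1/2) := by nlinarith

lemma num3 {d u L : ℝ} (hd : 2 ≤ d) (hu0 : 0 < u) (h8 : 8*u < 1) (hL1 : 1 ≤ L)
    (hdu2 : d*u^2 = L) :
    (1-8*u)^2*(d-1) + (2*L+4) ≤ d - 4*(d*u) := by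
  have hd0 : (0:ℝ) < d := by linarith
  have e2 : 8*L ≤ d*u := by
    nlinarith [mul_nonneg (mul_nonneg hd0.le hu0.le) (by linarith : (0:ℝ) ≤ 1 - 8*u)]
  have e1 : (1-8*u)^2*(d-1) ≤ (1-8*u)*d := by
    nlinarith [mul_nonneg (mul_nonneg (by linarith : (0:ℝ) ≤ 1-8*u)
      (by linarith : (0:ℝ) ≤ 8*u)) (by linarith : (0:ℝ) ≤ d-1)]
  nlinarith [e1, e2]

end Chernoff

set_option maxHeartbeats 4000000

/-- Concentration of the sample standard deviation of i.i.d. Gaussians: for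
`δ ∈ (0,1)` and `d ≥ max{2, log(6/δ)}`, with probability at least `1 - δ/3`,
`|s - σ| ≤ 8σ·√(log(6/δ)/d)`. -/
theorem sample_std_concentration
    {Ω : Type*} [MeasureSpace Ω] [IsProbabilityMeasure (ℙ : Measure Ω)]
    (d : ℕ) (μ : ℝ) (v : NNReal) (hv : v ≠ 0)
    (X : Fin d → Ω → ℝ) (hmeas : ∀ i, Measurable (X i))
    (hindep : iIndepFun X ℙ)
    (hlaw : ∀ i, Measure.map (X i) ℙ = gaussianReal μ v)
    (δ : ℝ) (hδ : δ ∈ Set.Ioo (0:ℝ) 1)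
    (hd2 : 2 ≤ d) (hdlog : Real.log (6 / δ) ≤ d) :
    ENNReal.ofReal (1 - δ / 3) ≤
      ℙ {ω : Ω |
        |Real.sqrt ((∑ i, (X i ω - (∑ j, X j ω) / d)^2) / ((d : ℝ) - 1)) - Real.sqrt v|
          ≤ 8 * Real.sqrt v * Real.sqrt (Real.log (6 / δ) / d)} := by
  obtain ⟨hδ0, hδ1⟩ := hδ
  have hv0 : (0:ℝ) < v := lt_of_le_of_ne v.coe_nonneg (by exact_mod_cast hv.symm)
  have hd2R : (2:ℝ) ≤ (d:ℝ) := by exact_mod_cast hd2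
  have hdpos : (0:ℝ) < (d:ℝ) := by linarith
  have hd1pos : (0:ℝ) < (d:ℝ) - 1 := by linarith
  set L := Real.log (6/δ) with hLdef
  have hL1 : 1 ≤ L := by
    rw [hLdef, Real.le_log_iff_exp_le (by positivity)]
    have h6 : (6:ℝ) ≤ 6/δ := by rw [le_div_iff₀ hδ0]; nlinarith
    linarith [Real.exp_one_lt_d9]
  have hLd : L ≤ (d:ℝ) := hdlog
  have hL0 : 0 < L := by linarith
  have hexpL : Real.exp (-L) = δ/6 := by
    rw [hLdef, Real.exp_neg, Real.exp_log (by positivity), inv_div]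
  set u := Real.sqrt (L/(d:ℝ)) with hudef
  have hu0 : 0 < u := Real.sqrt_pos.2 (by positivity)
  have hu2 : u^2 = L/(d:ℝ) := Real.sq_sqrt (by positivity)
  have hdu2 : (d:ℝ) * u^2 = L := by rw [hu2]; field_simp
  have hL1' : 1 ≤ (d:ℝ)*u^2 := by rw [hdu2]; exact hL1
  have hu1 : u ≤ 1 := by
    rw [hudef, show (1:ℝ) = Real.sqrt 1 from Real.sqrt_one.symm]
    apply Real.sqrt_le_sqrt
    rw [div_le_one hdpos]; exact hLd
  -- the centered variables
  set Z : Fin d → Ω → ℝ := fun i ω => X i ω - μ with hZdef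
  have hZm : ∀ i, Measurable (Z i) := fun i => (hmeas i).sub measurable_const
  have hZi : iIndepFun Z ℙ := by
    have h := hindep.comp (fun _ => fun x : ℝ => x - μ)
      (fun _ => measurable_id.sub_const μ)
    exact h
  have hZl : ∀ i, Measure.map (Z i) ℙ = gaussianReal 0 v := by
    intro i
    have h1 : Z i = (fun x : ℝ => x + (-μ)) ∘ (X i) := by
      funext ω; simp [hZdef, sub_eq_add_neg]
    rw [h1, ← Measure.map_map (measurable_id'.add_const (-μ)) (hmeas i), hlaw i,
      gaussianReal_map_add_const (-μ)]
    norm_num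
  -- the four bad events
  set a1 : ℝ := ((d:ℝ)-1)*(1+8*u)^2 with ha1def
  set a2 : ℝ := (d:ℝ) - 4*((d:ℝ)*u) with ha2def
  set c : ℝ := 2*L + 4 with hcdef
  have hc0 : 0 ≤ c := by linarith
  set r : ℝ := Real.sqrt ((v:ℝ)*((d:ℝ)*c)) with hrdef
  have hr0 : 0 ≤ r := Real.sqrt_nonneg _
  have hr2 : r^2 = (v:ℝ)*((d:ℝ)*c) := Real.sq_sqrt (by positivity)
  set B1 : Set Ω := {ω | (v:ℝ)*a1 ≤ ∑ i, (Z i ω)^2} with hB1def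
  set B2 : Set Ω := {ω | ∑ i, (Z i ω)^2 ≤ (v:ℝ)*a2} with hB2def
  set B3 : Set Ω := {ω | r ≤ ∑ i, Z i ω} with hB3def
  set B4 : Set Ω := {ω | ∑ i, Z i ω ≤ -r} with hB4def
  have hWm : Measurable (fun ω => ∑ i, (Z i ω)^2) :=
    Finset.measurable_sum _ (fun i _ => (hZm i).pow_const 2)
  have hTm : Measurable (fun ω => ∑ i, Z i ω) :=
    Finset.measurable_sum _ (fun i _ => hZm i)
  have hB1m : MeasurableSet B1 := measurableSet_le measurable_const hWm
  have hB2m : MeasurableSet B2 := measurableSet_le hWm measurable_const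
  have hB3m : MeasurableSet B3 := measurableSet_le measurable_const hTm
  have hB4m : MeasurableSet B4 := measurableSet_le hTm measurable_const
  -- probability bounds
  have hexp2 : Real.exp (-(L+1/2)) ≤ δ/9 := by
    have h32 : (3:ℝ)/2 ≤ Real.exp (1/2) := by linarith [Real.add_one_le_exp (1/2:ℝ)]
    have hmul : Real.exp (-(1/2):ℝ) * Real.exp (1/2) = 1 := by
      rw [← Real.exp_add]; norm_num
    have he : Real.exp (-(1/2) : ℝ) ≤ 2/3 := by
      linarith [mul_nonneg (le_of_lt (Real.exp_pos (-(1/2):ℝ)))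
        (by linarith : (0:ℝ) ≤ Real.exp (1/2) - 3/2), hmul]
    have hsplit : Real.exp (-(L+1/2)) = Real.exp (-L) * Real.exp (-(1/2)) := by
      rw [← Real.exp_add]; congr 1; ring
    rw [hsplit, hexpL]
    linarith [mul_nonneg (by linarith : (0:ℝ) ≤ δ)
      (by linarith : (0:ℝ) ≤ 2/3 - Real.exp (-(1/2):ℝ))]
  have hexp3 : Real.exp (-(L+2)) ≤ δ/18 := by
    have h3 : (3:ℝ) ≤ Real.exp 2 := by linarith [Real.add_one_le_exp (2:ℝ)]
    have hmul : Real.exp (-(2:ℝ)) * Real.exp 2 = 1 := by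
      rw [← Real.exp_add]; norm_num
    have he : Real.exp (-(2:ℝ)) ≤ 1/3 := by
      linarith [mul_nonneg (le_of_lt (Real.exp_pos (-(2:ℝ))))
        (by linarith : (0:ℝ) ≤ Real.exp 2 - 3), hmul]
    have hsplit : Real.exp (-(L+2)) = Real.exp (-L) * Real.exp (-(2:ℝ)) := by
      rw [← Real.exp_add]; congr 1; ring
    rw [hsplit, hexpL]
    linarith [mul_nonneg (by linarith : (0:ℝ) ≤ δ)
      (by linarith : (0:ℝ) ≤ 1/3 - Real.exp (-(2:ℝ)))]
  have h1R : (ℙ B1).toReal ≤ δ/9 := by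
    set lam := min (1/4 : ℝ) u with hlamdef
    have hlam0 : 0 ≤ lam := le_min (by norm_num) hu0.le
    have hlam14 : lam ≤ 1/4 := min_le_left _ _
    have hlam1 : 2*lam < 1 := by linarith
    have hch := chernoff_sq_upper hv hZm hZi hZl hlam0 hlam1 a1
    refine hch.trans (le_trans ?_ hexp2)
    rw [Real.exp_le_exp]
    have hlog := log_one_sub_ge (y := 2*lam) (by linarith) (by linarith)
    have hlogd : (d:ℝ)*(-(2*lam) - 2*(2*lam)^2) ≤ (d:ℝ)*Real.log (1-2*lam) :=
      mul_le_mul_of_nonneg_left hlog hdpos.le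
    have hnum : L + 1/2 ≤ lam*a1 - ((d:ℝ)*lam + 4*(d:ℝ)*lam^2) := by
      rcases le_total u (1/4 : ℝ) with hcase | hcase
      · have hlu : lam = u := by rw [hlamdef, min_eq_right hcase]
        rw [hlu, ha1def, ← hdu2]
        exact num1a hd2R hu0 hcase hL1'
      · have hlu : lam = 1/4 := by rw [hlamdef, min_eq_left hcase]
        rw [hlu, ha1def, ← hdu2]
        exact num1b hd2R hcase hu1
    linarith
  have h2R : (ℙ B2).toReal ≤ δ/9 := by
    have hch := chernoff_sq_lower hv hZm hZi hZl (lam := u) hu0.le a2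
    refine hch.trans (le_trans ?_ hexp2)
    rw [Real.exp_le_exp]
    have hlog := log_one_add_ge (y := 2*u) (by linarith)
    have hlogd : (d:ℝ)*(2*u - (2*u)^2) ≤ (d:ℝ)*Real.log (1+2*u) :=
      mul_le_mul_of_nonneg_left hlog hdpos.le
    rw [ha2def]
    exact num2 hL1 hdu2 hlogd
  have h3R : (ℙ B3).toReal ≤ δ/18 := by
    have hch := chernoff_lin_upper hv (by omega) hZm hZi hZl hr0
    refine hch.trans (le_trans ?_ hexp3)
    rw [Real.exp_le_exp, neg_le_neg_iff]
    rw [hr2]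
    rw [show ((v:ℝ)*((d:ℝ)*c))/(2*(d:ℝ)*(v:ℝ)) = c/2 from by field_simp]
    rw [hcdef]; linarith
  have h4R : (ℙ B4).toReal ≤ δ/18 := by
    have hch := chernoff_lin_lower hv (by omega) hZm hZi hZl hr0
    refine hch.trans (le_trans ?_ hexp3)
    rw [Real.exp_le_exp, neg_le_neg_iff]
    rw [hr2]
    rw [show ((v:ℝ)*((d:ℝ)*c))/(2*(d:ℝ)*(v:ℝ)) = c/2 from by field_simp]
    rw [hcdef]; linarith
  -- total bad probability
  have hofReal : ∀ (B : Set Ω) (q : ℝ), (ℙ B).toReal ≤ q → ℙ B ≤ ENNReal.ofReal q := by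
    intro B q h
    rw [← ENNReal.ofReal_toReal (measure_ne_top ℙ B)]
    exact ENNReal.ofReal_le_ofReal h
  have hUnion : ℙ (B1 ∪ B2 ∪ B3 ∪ B4) ≤ ENNReal.ofReal (δ/3) := by
    calc ℙ (B1 ∪ B2 ∪ B3 ∪ B4) ≤ ℙ (B1 ∪ B2 ∪ B3) + ℙ B4 := measure_union_le _ _
      _ ≤ (ℙ (B1 ∪ B2) + ℙ B3) + ℙ B4 := by gcongr; exact measure_union_le _ _
      _ ≤ ((ℙ B1 + ℙ B2) + ℙ B3) + ℙ B4 := by gcongr; exact measure_union_le _ _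
      _ ≤ ((ENNReal.ofReal (δ/9) + ENNReal.ofReal (δ/9)) + ENNReal.ofReal (δ/18))
            + ENNReal.ofReal (δ/18) := by
          gcongr
          · exact hofReal _ _ h1R
          · exact hofReal _ _ h2R
          · exact hofReal _ _ h3R
          · exact hofReal _ _ h4R
      _ = ENNReal.ofReal (δ/3) := by
          rw [← ENNReal.ofReal_add (by positivity) (by positivity),
            ← ENNReal.ofReal_add (by positivity) (by positivity),
            ← ENNReal.ofReal_add (by positivity) (by positivity)]
          congr 1
          ring
  -- inclusion of the good event
  have hsubset : (B1 ∪ B2 ∪ B3 ∪ B4)ᶜ ⊆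
      {ω : Ω |
        |Real.sqrt ((∑ i, (X i ω - (∑ j, X j ω) / d)^2) / ((d : ℝ) - 1)) - Real.sqrt v|
          ≤ 8 * Real.sqrt v * u} := by
    intro ω hω
    simp only [Set.mem_compl_iff, Set.mem_union, not_or, hB1def, hB2def, hB3def, hB4def,
      Set.mem_setOf_eq, not_le] at hω
    obtain ⟨⟨⟨h1, h2⟩, h3⟩, h4⟩ := hω
    simp only [Set.mem_setOf_eq]
    have hkey : (∑ i, (X i ω - (∑ j, X j ω)/(d:ℝ))^2)
        = (∑ i, (Z i ω)^2) - (∑ i, Z i ω)^2/(d:ℝ) := by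
      have h := sample_var_identity d hdpos.ne' (fun i => X i ω) μ
      exact h
    have hT2 : (∑ i, Z i ω)^2 < (v:ℝ)*((d:ℝ)*c) := by
      rw [← hr2]
      exact sq_lt_sq' h4 h3
    have hQ0 : 0 ≤ (∑ i, (X i ω - (∑ j, X j ω)/(d:ℝ))^2) :=
      Finset.sum_nonneg fun i _ => sq_nonneg _
    rw [hkey] at hQ0 ⊢
    have hsd := sqrt_dev (a := ((∑ i, (Z i ω)^2) - (∑ i, Z i ω)^2/(d:ℝ))/((d:ℝ)-1))
      (b := (v:ℝ)) (ε := 8*u) (div_nonneg hQ0 hd1pos.le) hv0.le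
      (by linarith : (0:ℝ) ≤ 8*u) ?_ ?_
    · calc |Real.sqrt (((∑ i, (Z i ω)^2) - (∑ i, Z i ω)^2/(d:ℝ))/((d:ℝ)-1)) - Real.sqrt v|
          ≤ Real.sqrt v * (8*u) := hsd
        _ = 8 * Real.sqrt v * u := by ring
    · -- upper bound
      rw [div_le_iff₀ hd1pos]
      have hT2' : 0 ≤ (∑ i, Z i ω)^2/(d:ℝ) := by positivity
      rw [ha1def] at h1
      linarith [h1, hT2']
    · -- lower bound or ε large
      by_cases h8 : 1 ≤ 8*u
      · exact Or.inr h8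
      · left
        push_neg at h8
        rw [le_div_iff₀ hd1pos]
        have hTd : (∑ i, Z i ω)^2/(d:ℝ) < (v:ℝ)*c := by
          rw [div_lt_iff₀ hdpos]
          calc (∑ i, Z i ω)^2 < (v:ℝ)*((d:ℝ)*c) := hT2
            _ = (v:ℝ)*c*(d:ℝ) := by ring
        rw [ha2def] at h2
        have e4 : (1-8*u)^2*((d:ℝ)-1) + c ≤ (d:ℝ) - 4*((d:ℝ)*u) := by
          rw [hcdef]
          exact num3 hd2R hu0 h8 hL1 hdu2
        have e3 : (v:ℝ)*((1-8*u)^2*((d:ℝ)-1)) ≤ (v:ℝ)*(((d:ℝ) - 4*((d:ℝ)*u)) - c) :=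
          mul_le_mul_of_nonneg_left (by linarith) hv0.le
        calc (v:ℝ)*(1-8*u)^2*((d:ℝ)-1) = (v:ℝ)*((1-8*u)^2*((d:ℝ)-1)) := by ring
          _ ≤ (v:ℝ)*(((d:ℝ) - 4*((d:ℝ)*u)) - c) := e3
          _ = (v:ℝ)*((d:ℝ) - 4*((d:ℝ)*u)) - (v:ℝ)*c := by ring
          _ ≤ (∑ i, (Z i ω)^2) - (v:ℝ)*c := by linarith [h2]
          _ ≤ (∑ i, (Z i ω)^2) - (∑ i, Z i ω)^2/(d:ℝ) := by linarith [hTd]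
  -- conclusion
  have hcompl : ENNReal.ofReal (1 - δ/3) ≤ ℙ ((B1 ∪ B2 ∪ B3 ∪ B4)ᶜ) := by
    rw [measure_compl (((hB1m.union hB2m).union hB3m).union hB4m) (measure_ne_top _ _),
      measure_univ]
    calc ENNReal.ofReal (1 - δ/3) = 1 - ENNReal.ofReal (δ/3) := by
          rw [ENNReal.ofReal_sub _ (by positivity), ENNReal.ofReal_one]
      _ ≤ 1 - ℙ (B1 ∪ B2 ∪ B3 ∪ B4) := tsub_le_tsub_left hUnion 1
  exact le_trans hcompl (measure_mono hsubset)
end
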